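/- Let c ∈ ℂ and let g : ℂ → ℂ be analytic at c with g(c) ≠ 0. Define f(z) := 1 + (z − c)² · g(z) near c (so f − 1 has a double zero at c, as at a ramification point of a clean Belyi function over 1). Then MP(f)(z) tends to −g(c)/π² as z → c within the punctured neighborhood 𝓝[≠] c; since −g(c)/π² ≠ 0, the quadratic differential MP(f) extends holomorphically to c and is nonzero there (it has order exactly 0 at c). -/

import Mathlib

open Complex Filter

/-- The Mulase–Penkava density of a function `f : ℂ → ℂ`:
`MP f z = (1/(4π²)) · (f'(z))² / (f z · (1 − f z))`. -/
noncomputable def MP (f : ℂ → ℂ) (z : ℂ) : ℂ :=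
  (1 / (4 * (Real.pi : ℂ) ^ 2)) * (deriv f z) ^ 2 / (f z * (1 - f z))

/-- If `f − 1` has a double zero at `c` (i.e. `f z = 1 + (z − c)² · g z` near `c`, with `g`
analytic at `c` and `g c ≠ 0`), as at a ramification point over `1` of a clean Belyi function,
then `MP f z` tends to `−g c / π² ≠ 0` as `z → c` within `𝓝[≠] c`: the quadratic
differential `MP f` extends holomorphically to `c` and is nonzero there. -/
theorem stmt_3 (c : ℂ) (g f : ℂ → ℂ)
    (hg : AnalyticAt ℂ g c) (hgc : g c ≠ 0)
    (hf : ∀ᶠ z in nhds c, f z = 1 + (z - c) ^ 2 * g z) :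
    Tendsto (fun z => MP f z) (nhdsWithin c {c}ᶜ)
      (nhds (-(g c) / (Real.pi : ℂ) ^ 2)) ∧
    -(g c) / (Real.pi : ℂ) ^ 2 ≠ 0 := by
  have hπ : (Real.pi : ℂ) ≠ 0 := Complex.ofReal_ne_zero.2 Real.pi_ne_zero
  have hπ2 : (4 : ℂ) * (Real.pi : ℂ) ^ 2 ≠ 0 := by
    simp [hπ]
  have heg : ∀ᶠ z in nhds c, AnalyticAt ℂ g z := hg.eventually_analyticAt
  -- eventual formula for the derivative
  have hderiv : ∀ᶠ z in nhds c, deriv f z = (z - c) * (2 * g z + (z - c) * deriv g z) := by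
    have h1 : deriv f =ᶠ[nhds c] deriv (fun z => 1 + (z - c) ^ 2 * g z) :=
      Filter.EventuallyEq.deriv hf
    filter_upwards [h1, heg] with z hz hz2
    have H : HasDerivAt (fun w => 1 + (w - c) ^ 2 * g w)
        ((2 * (z - c) ^ 1 * 1) * g z + (z - c) ^ 2 * deriv g z) z := by
      have hpow : HasDerivAt (fun w : ℂ => (w - c) ^ 2) (2 * (z - c) ^ 1 * 1) z := by
        simpa using (((hasDerivAt_id z).sub_const c).fun_pow 2)
      exact (hpow.mul hz2.differentiableAt.hasDerivAt).const_add 1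
    rw [hz, H.deriv]; ring
  -- eventual nonvanishing
  have hgne : ∀ᶠ z in nhds c, g z ≠ 0 := hg.continuousAt.eventually_ne hgc
  have hone : ∀ᶠ z in nhds c, 1 + (z - c) ^ 2 * g z ≠ 0 := by
    have hc : ContinuousAt (fun z => 1 + (z - c) ^ 2 * g z) c :=
      continuousAt_const.add
        (((continuousAt_id.sub continuousAt_const).pow 2).mul hg.continuousAt)
    have := hc.eventually_ne (by simp : (1 : ℂ) + (c - c) ^ 2 * g c ≠ 0)
    simpa using this
  -- limit candidate function
  set h : ℂ → ℂ := fun z =>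
    (1 / (4 * (Real.pi : ℂ) ^ 2)) * (2 * g z + (z - c) * deriv g z) ^ 2 /
      (-(g z) * (1 + (z - c) ^ 2 * g z)) with hh
  have key : ∀ᶠ z in nhdsWithin c {c}ᶜ, MP f z = h z := by
    filter_upwards [hf.filter_mono nhdsWithin_le_nhds, hderiv.filter_mono nhdsWithin_le_nhds,
      hgne.filter_mono nhdsWithin_le_nhds, hone.filter_mono nhdsWithin_le_nhds,
      self_mem_nhdsWithin] with z h1 h2 h3 h4 hz
    have hzc : z - c ≠ 0 := sub_ne_zero.2 hz
    have hden : f z * (1 - f z) =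
        (z - c) ^ 2 * (-(g z) * (1 + (z - c) ^ 2 * g z)) := by rw [h1]; ring
    rw [MP, hden, h2, hh]
    rw [show (1 / (4 * (Real.pi : ℂ) ^ 2)) * ((z - c) * (2 * g z + (z - c) * deriv g z)) ^ 2
        = (z - c) ^ 2 * ((1 / (4 * (Real.pi : ℂ) ^ 2)) * (2 * g z + (z - c) * deriv g z) ^ 2)
      from by ring,
      mul_div_mul_left _ _ (pow_ne_zero 2 hzc)]
  have hdg : ContinuousAt (deriv g) c := by
    obtain ⟨s, hs_mem, hs⟩ := heg.exists_mem
    exact ((AnalyticOnNhd.deriv hs) c (mem_of_mem_nhds hs_mem)).continuousAt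
  have hgC : ContinuousAt g c := hg.continuousAt
  have hcont : ContinuousAt h c := by
    rw [hh]
    exact ContinuousAt.div (by fun_prop) (by fun_prop) (by simp [hgc])
  have hval : h c = -(g c) / (Real.pi : ℂ) ^ 2 := by
    rw [hh]
    simp only [sub_self]
    field_simp
    ring
  constructor
  · have := hcont.tendsto.mono_left (nhdsWithin_le_nhds (s := ({c}ᶜ : Set ℂ)))
    rw [hval] at this
    exact this.congr' (key.mono fun z hz => hz.symm)
  · exact div_ne_zero (neg_ne_zero.2 hgc) (pow_ne_zero 2 hπ)
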